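/- For every λ ∈ ℂ with |λ| < 1, every natural number n and every integer l with l < n, the matrix coefficients satisfy L(−n, −l) = 0 and L(n, l) = 0. In particular, for l < n the integrand z^{n−l−1}·((λ − z)/(1 − conj(λ)·z))^n is holomorphic on a neighbourhood of the closed unit disc and its circle integral over the unit circle vanishes. -/

import Mathlib

open Complex Metric Real

/-- The matrix coefficient L(n,l) = (1/(2πi))·∮_{|z|=1} z^{l−n−1}·((1 − conj(λ)z)/(λ − z))^n dz
of the transfer operator of the circle map τ_λ(z) = z(λ − z)/(1 − conj(λ)z). -/
noncomputable def transferCoef (lam : ℂ) (n l : ℤ) : ℂ :=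
  (1 / (2 * Real.pi * Complex.I)) *
    ∮ z in C(0, 1), z ^ (l - n - 1) * ((1 - (starRingEnd ℂ) lam * z) / (lam - z)) ^ n

lemma transfer_aux (μ : ℂ) (hμ : ‖μ‖ < 1) (n : ℕ) (m : ℤ) (hm : 0 ≤ m) :
    (∃ V : Set ℂ, IsOpen V ∧ Metric.closedBall (0:ℂ) 1 ⊆ V ∧
      DifferentiableOn ℂ
        (fun z : ℂ => z ^ m * ((μ - z) / (1 - (starRingEnd ℂ) μ * z)) ^ (n : ℤ)) V) ∧
    (∮ z in C(0, 1), z ^ m * ((μ - z) / (1 - (starRingEnd ℂ) μ * z)) ^ (n : ℤ)) = 0 := by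
  set V : Set ℂ := {z | ‖μ‖ * ‖z‖ < 1} with hV
  have hopen : IsOpen V := by
    have hc : Continuous fun z : ℂ => ‖μ‖ * ‖z‖ := by continuity
    exact isOpen_lt hc continuous_const
  have hsub : Metric.closedBall (0:ℂ) 1 ⊆ V := by
    intro z hz
    simp only [Metric.mem_closedBall, dist_zero_right] at hz
    have h1 : ‖μ‖ * ‖z‖ ≤ ‖μ‖ * 1 :=
      mul_le_mul_of_nonneg_left hz (norm_nonneg μ)
    simp only [hV, Set.mem_setOf_eq]
    linarith
  have hne : ∀ z ∈ V, (1 : ℂ) - (starRingEnd ℂ) μ * z ≠ 0 := by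
    intro z hz h
    have h1 : (starRingEnd ℂ) μ * z = 1 := by linear_combination -h
    have h2 := congrArg (‖·‖) h1
    simp only [norm_mul, Complex.norm_conj, norm_one] at h2
    simp only [hV, Set.mem_setOf_eq] at hz
    rw [h2] at hz
    exact absurd hz (lt_irrefl 1)
  have hdiff : DifferentiableOn ℂ
      (fun z : ℂ => z ^ m * ((μ - z) / (1 - (starRingEnd ℂ) μ * z)) ^ (n : ℤ)) V := by
    simp only [zpow_natCast]
    intro z hz
    apply DifferentiableAt.differentiableWithinAt
    exact (differentiableAt_zpow.mpr (Or.inr hm)).mul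
      ((((differentiableAt_const μ).sub differentiableAt_id).div
        ((differentiableAt_const 1).sub ((differentiableAt_const _).mul differentiableAt_id))
        (hne z hz)).pow n)
  refine ⟨⟨V, hopen, hsub, hdiff⟩, ?_⟩
  exact circleIntegral_eq_zero_of_differentiable_on_off_countable zero_le_one
    Set.countable_empty (hdiff.continuousOn.mono hsub)
    (fun z hz => hdiff.differentiableAt
      (hopen.mem_nhds (hsub (Metric.ball_subset_closedBall hz.1))))

lemma circleIntegral_inv_comp (g : ℂ → ℂ) :
    (∮ z in C(0, 1), g z) = ∮ z in C(0, 1), (z * z)⁻¹ * g z⁻¹ := by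
  rw [circleIntegral, circleIntegral]
  simp only [deriv_circleMap, smul_eq_mul]
  set F : ℝ → ℂ := fun θ => circleMap 0 1 θ * Complex.I * g (circleMap 0 1 θ) with hF
  have hper : Function.Periodic F (2 * π) := by
    intro θ
    simp only [hF, periodic_circleMap 0 1 θ]
  have key : ∀ θ : ℝ, circleMap 0 1 (-θ) = (circleMap 0 1 θ)⁻¹ := by
    intro θ
    simp only [circleMap, zero_add, one_mul]
    rw [show ((-θ : ℝ) : ℂ) * Complex.I = -(↑θ * Complex.I) by push_cast; ring,
      Complex.exp_neg]
    simp
  have hfun : ∀ θ : ℝ,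
      circleMap 0 1 θ * Complex.I *
        ((circleMap 0 1 θ * circleMap 0 1 θ)⁻¹ * g (circleMap 0 1 θ)⁻¹) = F (-θ) := by
    intro θ
    have hz : circleMap 0 1 θ ≠ 0 := circleMap_ne_center one_ne_zero
    simp only [hF, key θ]
    field_simp
  calc (∫ θ in (0:ℝ)..2 * π, F θ)
      = ∫ θ in (-(2 * π))..0, F θ := by
        have h := hper.intervalIntegral_add_eq (-(2 * π)) 0
        simpa using h.symm
    _ = ∫ θ in (0:ℝ)..2 * π, F (-θ) := by
        have h := intervalIntegral.integral_comp_neg (a := (0:ℝ)) (b := 2 * π) F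
        simpa using h.symm
    _ = ∫ θ in (0:ℝ)..2 * π, circleMap 0 1 θ * Complex.I *
          ((circleMap 0 1 θ * circleMap 0 1 θ)⁻¹ * g (circleMap 0 1 θ)⁻¹) := by
        simp only [hfun]

/-- For λ ∈ ℂ with |λ| < 1, a natural number n and an integer l < n, the matrix
coefficients satisfy L(−n, −l) = 0 and L(n, l) = 0; in particular the integrand
z^{n−l−1}·((λ − z)/(1 − conj(λ)z))ⁿ is holomorphic on a neighbourhood of the closed unit
disc and its circle integral over the unit circle vanishes. -/
theorem transferCoef_triangular (lam : ℂ) (hlam : ‖lam‖ < 1)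
    (n : ℕ) (l : ℤ) (hl : l < (n : ℤ)) :
    transferCoef lam (-(n : ℤ)) (-l) = 0 ∧
    transferCoef lam (n : ℤ) l = 0 ∧
    (∃ V : Set ℂ, IsOpen V ∧ Metric.closedBall (0 : ℂ) 1 ⊆ V ∧
      DifferentiableOn ℂ
        (fun z : ℂ => z ^ ((n : ℤ) - l - 1) * ((lam - z) / (1 - (starRingEnd ℂ) lam * z)) ^ (n : ℤ))
        V) ∧
    (∮ z in C(0, 1),
        z ^ ((n : ℤ) - l - 1) * ((lam - z) / (1 - (starRingEnd ℂ) lam * z)) ^ (n : ℤ)) = 0 := by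
  have hm : (0 : ℤ) ≤ (n : ℤ) - l - 1 := by omega
  obtain ⟨hexist, hzero⟩ := transfer_aux lam hlam n ((n : ℤ) - l - 1) hm
  have hconj : ‖(starRingEnd ℂ) lam‖ < 1 := by
    rwa [Complex.norm_conj]
  obtain ⟨_, hzero'⟩ := transfer_aux ((starRingEnd ℂ) lam) hconj n ((n : ℤ) - l - 1) hm
  refine ⟨?_, ?_, hexist, hzero⟩
  · unfold transferCoef
    have hint : (fun z : ℂ => z ^ (-l - -(n : ℤ) - 1) *
        ((1 - (starRingEnd ℂ) lam * z) / (lam - z)) ^ (-(n : ℤ)))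
        = fun z : ℂ => z ^ ((n : ℤ) - l - 1) *
          ((lam - z) / (1 - (starRingEnd ℂ) lam * z)) ^ (n : ℤ) := by
      funext z
      rw [show -l - -(n : ℤ) - 1 = (n : ℤ) - l - 1 by ring, zpow_neg, ← inv_zpow, inv_div]
    simp only [hint]
    rw [hzero, mul_zero]
  · unfold transferCoef
    set g : ℂ → ℂ := fun z => z ^ (l - (n : ℤ) - 1) *
      ((1 - (starRingEnd ℂ) lam * z) / (lam - z)) ^ (n : ℤ) with hg
    have h1 : (∮ z in C(0, 1), g z) = ∮ z in C(0, 1), (z * z)⁻¹ * g z⁻¹ :=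
      circleIntegral_inv_comp g
    have h2 : (∮ z in C(0, 1), (z * z)⁻¹ * g z⁻¹) =
        ∮ z in C(0, 1), z ^ ((n : ℤ) - l - 1) *
          (((starRingEnd ℂ) lam - z) / (1 - (starRingEnd ℂ) ((starRingEnd ℂ) lam) * z)) ^ (n : ℤ) := by
      apply circleIntegral.integral_congr zero_le_one
      intro z hz
      have habs : ‖z‖ = 1 := by simpa using hz
      have hz0 : z ≠ 0 := by
        intro h; rw [h] at habs; simp at habs
      have hlz : (1 : ℂ) - lam * z ≠ 0 := by
        intro h
        have h1' : lam * z = 1 := by linear_combination -h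
        have h2' := congrArg (‖·‖) h1'
        simp only [norm_mul, norm_one, habs, mul_one] at h2'
        rw [h2'] at hlam; exact absurd hlam (lt_irrefl 1)
      have hli : lam - z⁻¹ ≠ 0 := by
        intro h
        have h1' : z⁻¹ = lam := by linear_combination -h
        have h2' : ‖z⁻¹‖ = 1 := by simp [habs]
        rw [h1'] at h2'
        rw [h2'] at hlam; exact absurd hlam (lt_irrefl 1)
      have hq : (1 - (starRingEnd ℂ) lam * z⁻¹) / (lam - z⁻¹)
          = ((starRingEnd ℂ) lam - z) / (1 - lam * z) := by
        rw [div_eq_div_iff hli hlz]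
        field_simp
        ring
      simp only [hg, Complex.conj_conj, hq]
      rw [show (l - (n : ℤ) - 1) = -((n : ℤ) - l + 1) by ring, zpow_neg, ← inv_zpow, inv_inv,
        show ((n : ℤ) - l + 1) = 2 + ((n : ℤ) - l - 1) by ring, zpow_add₀ hz0,
        show (z : ℂ) ^ (2 : ℤ) = z * z by rw [zpow_two]]
      field_simp
    have h3 : (∮ z in C(0, 1), z ^ ((n : ℤ) - l - 1) *
        (((starRingEnd ℂ) lam - z) / (1 - (starRingEnd ℂ) ((starRingEnd ℂ) lam) * z)) ^ (n : ℤ)) = 0 :=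
      hzero'
    rw [h1, h2, h3, mul_zero]
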